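/- Suppose α ≤ 1, α_{i*}β ≤ d, and α - log^{-2}(n) ≤ α_{i*} ≤ α. Then the rate exponents satisfy α_{i*}(1+β)/(2α_{i*} + d - α_{i*}β) ≥ α(1+β)/(2α + [d - αβ]₊) - (1+β)(2α + d)/(log²(n)·(2α + [d - αβ]₊)²). -/

import Mathlib

lemma auxP (x δ c d α : ℝ) (hx : 0 < x) (hδ : 0 < δ) (hc : 0 ≤ c)
    (hα : α = x + δ) (hα1 : α ≤ 1) (hd : 1 ≤ d)
    (h1 : c * x ≤ (d - c) * δ) :
    2 * α ^ 2 * c ≤ δ * (2 * x + c) * (2 * α + d) := by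
  nlinarith [mul_nonneg hc (sub_nonneg.2 hα1), mul_nonneg hδ.le hc,
    mul_nonneg (mul_nonneg hδ.le hδ.le) hc, mul_nonneg hx.le hc,
    mul_nonneg (sub_nonneg.2 h1) hδ.le, mul_nonneg (sub_nonneg.2 h1) hx.le,
    mul_nonneg (sub_nonneg.2 h1) hc, mul_pos hx hδ, sq_nonneg (x - δ),
    mul_nonneg (mul_nonneg hc (sub_nonneg.2 hα1)) hδ.le,
    mul_nonneg (mul_nonneg hc (sub_nonneg.2 hα1)) hx.le]

set_option maxHeartbeats 1000000 in
/-- Rate-exponent stability under grid approximation: if `α ≤ 1`, `α_{i*}β ≤ d` and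
`α - log^{-2}(n) ≤ α_{i*} ≤ α`, then
`α_{i*}(1+β)/(2α_{i*} + d - α_{i*}β) ≥ α(1+β)/(2α + [d-αβ]₊)
  - (1+β)(2α+d)/(log²(n)(2α + [d-αβ]₊)²)`. -/
theorem stmt_18 (d : ℕ) (hd : 1 ≤ d) (α αs β n : ℝ)
    (hαs0 : 0 < αs) (hα1 : α ≤ 1) (hβ : 0 ≤ β) (hn : 1 < n)
    (hαsβ : αs * β ≤ d)
    (hlo : α - ((Real.log n) ^ (2 : ℕ))⁻¹ ≤ αs) (hhi : αs ≤ α) :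
    αs * (1 + β) / (2 * αs + d - αs * β) ≥
      α * (1 + β) / (2 * α + max ((d : ℝ) - α * β) 0) -
        (1 + β) * (2 * α + d) /
          ((Real.log n) ^ (2 : ℕ) * (2 * α + max ((d : ℝ) - α * β) 0) ^ (2 : ℕ)) := by
  set L : ℝ := (Real.log n) ^ (2 : ℕ) with hLdef
  have hlog : 0 < Real.log n := Real.log_pos hn
  have hL : 0 < L := by positivity
  have hd1 : (1 : ℝ) ≤ d := by exact_mod_cast hd
  have hα0 : 0 < α := lt_of_lt_of_le hαs0 hhi
  have hδ0 : 0 ≤ α - αs := sub_nonneg.2 hhi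
  have hLδ : L * (α - αs) ≤ 1 := by
    have h : α - αs ≤ L⁻¹ := by linarith
    calc L * (α - αs) ≤ L * L⁻¹ := by
          exact mul_le_mul_of_nonneg_left h hL.le
      _ = 1 := mul_inv_cancel₀ hL.ne'
  have hB : 0 < 2 * αs + d - αs * β := by linarith
  have h1β : 0 < 1 + β := by linarith
  rcases le_or_gt (α * β) d with hc1 | hc2
  · -- case α β ≤ d
    have hmax : max ((d : ℝ) - α * β) 0 = (d : ℝ) - α * β :=
      max_eq_left (by linarith)
    rw [hmax]
    have hD : 0 < 2 * α + ((d : ℝ) - α * β) := by linarith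
    have key1 : (d : ℝ) * (2 * α + (d - α * β)) ≤
        (2 * α + d) * (2 * αs + d - αs * β) := by
      nlinarith [mul_nonneg (mul_nonneg hβ (by linarith : (0:ℝ) ≤ d)) hδ0,
        mul_nonneg hαs0.le (sub_nonneg.2 hc1), mul_pos hα0 hαs0]
    have key2 : (d : ℝ) * (α - αs) * L * (2 * α + (d - α * β)) ≤
        (2 * α + d) * (2 * αs + d - αs * β) := by
      have h3 : (d : ℝ) * (α - αs) * L ≤ d := by
        nlinarith [mul_nonneg (by linarith : (0:ℝ) ≤ d) (sub_nonneg.2 hLδ)]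
      calc (d : ℝ) * (α - αs) * L * (2 * α + (d - α * β))
          ≤ d * (2 * α + (d - α * β)) := by
            apply mul_le_mul_of_nonneg_right h3 hD.le
        _ ≤ _ := key1
    have hdiff : α * (1 + β) / (2 * α + ((d : ℝ) - α * β)) -
        αs * (1 + β) / (2 * αs + d - αs * β) =
        (1 + β) * d * (α - αs) /
          ((2 * α + ((d : ℝ) - α * β)) * (2 * αs + d - αs * β)) := by
      rw [div_sub_div _ _ hD.ne' hB.ne', div_eq_div_iff (mul_ne_zero hD.ne' hB.ne') (mul_ne_zero hD.ne' hB.ne')]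
      ring
    have hbound : (1 + β) * d * (α - αs) /
          ((2 * α + ((d : ℝ) - α * β)) * (2 * αs + d - αs * β)) ≤
        (1 + β) * (2 * α + d) / (L * (2 * α + ((d : ℝ) - α * β)) ^ (2 : ℕ)) := by
      rw [div_le_div_iff₀ (by positivity) (by positivity)]
      have := mul_le_mul_of_nonneg_left key2
        (by positivity : (0:ℝ) ≤ (1 + β) * (2 * α + (d - α * β)))
      nlinarith [this]
    linarith [hdiff ▸ (le_of_eq hdiff.symm), hbound, hdiff.symm ▸ hbound]
  · -- case d < α β
    have hmax : max ((d : ℝ) - α * β) 0 = 0 := max_eq_right (by linarith)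
    rw [hmax]
    have hβ0 : 0 < β := by
      rcases hβ.lt_or_eq with h | h
      · exact h
      · exfalso; rw [← h] at hc2; simp at hc2; linarith
    have hδpos : 0 < α - αs := by nlinarith
    have hcx : (d - αs * β) * αs ≤ ((d : ℝ) - (d - αs * β)) * (α - αs) := by
      have : (d : ℝ) - (d - αs * β) = αs * β := by ring
      rw [this]
      nlinarith [mul_nonneg hαs0.le (sub_nonneg.2 hc2.le)]
    have keyP : 2 * α ^ 2 * ((d : ℝ) - αs * β) ≤
        (α - αs) * (2 * αs + (d - αs * β)) * (2 * α + d) :=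
      auxP αs (α - αs) ((d : ℝ) - αs * β) d α hαs0 hδpos (by linarith)
        (by ring) hα1 hd1 hcx
    have key2 : 2 * α ^ 2 * L * ((d : ℝ) - αs * β) ≤
        (2 * α + d) * (2 * αs + d - αs * β) := by
      have hmul : 2 * α ^ 2 * L * ((d : ℝ) - αs * β) * (α - αs) ≤
          (α - αs) * (2 * αs + (d - αs * β)) * (2 * α + d) := by
        calc 2 * α ^ 2 * L * ((d : ℝ) - αs * β) * (α - αs)
            = (2 * α ^ 2 * ((d : ℝ) - αs * β)) * (L * (α - αs)) := by ring
          _ ≤ (2 * α ^ 2 * ((d : ℝ) - αs * β)) * 1 := by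
              apply mul_le_mul_of_nonneg_left hLδ
              exact mul_nonneg (by positivity) (by linarith : (0:ℝ) ≤ (d:ℝ) - αs * β)
          _ = 2 * α ^ 2 * ((d : ℝ) - αs * β) := by ring
          _ ≤ _ := keyP
      refine le_of_mul_le_mul_right ?_ hδpos
      calc 2 * α ^ 2 * L * ((d : ℝ) - αs * β) * (α - αs) ≤ _ := hmul
        _ = (2 * α + d) * (2 * αs + d - αs * β) * (α - αs) := by ring
    have hdiff : α * (1 + β) / (2 * α + 0) -
        αs * (1 + β) / (2 * αs + d - αs * β) =
        (1 + β) * ((d : ℝ) - αs * β) / (2 * (2 * αs + d - αs * β)) := by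
      rw [div_sub_div _ _ (by positivity : (2 * α + 0) ≠ 0) hB.ne', div_eq_div_iff (mul_ne_zero (by positivity : (2 * α + 0) ≠ 0) hB.ne') (mul_ne_zero two_ne_zero hB.ne')]
      ring
    have hbound : (1 + β) * ((d : ℝ) - αs * β) / (2 * (2 * αs + d - αs * β)) ≤
        (1 + β) * (2 * α + d) / (L * (2 * α + 0) ^ (2 : ℕ)) := by
      rw [div_le_div_iff₀ (by positivity) (by positivity)]
      nlinarith [mul_le_mul_of_nonneg_left key2 (by positivity : (0:ℝ) ≤ 2 * (1 + β))]
    linarith [hdiff, hbound]
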